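/- Let G be a k-uniform hypergraph on n vertices with degree sequence d₁ ≥ d₂ ≥ … ≥ d_n, with d₁ > d₂ > 0. Let d* be a root of h(t) = d₂ t^k + (d₂ − d₁) t^{k−1} − d₁ in ((d₁/d₂)^{1/k}, d₁/d₂). Then the signless Laplacian spectral radius satisfies μ(G) ≤ d₁ + d₁ (1/d*)^{k−1}. -/

import Mathlib

/-- The spectral radius of an order-`k` tensor of dimension `n`: the largest modulus of its
(complex) eigenvalues, where `ρ` is an eigenvalue if `T x = ρ x^{[k-1]}` for some `x ≠ 0`. -/
noncomputable def specRad (n k : ℕ) (T : Fin n → (Fin (k-1) → Fin n) → ℝ) : ℝ :=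
  sSup {r : ℝ | ∃ ρ : ℂ, ‖ρ‖ = r ∧ ∃ x : Fin n → ℂ, x ≠ 0 ∧
    ∀ i, (∑ f : Fin (k-1) → Fin n, (T i f : ℂ) * ∏ a, x (f a)) = ρ * x i ^ (k-1)}

/-- A hypergraph on vertex set `Fin n` is a finite set of edges; `hDeg` is the degree of
vertex `i`, the number of edges containing `i`. -/
def hDeg (n : ℕ) (E : Finset (Finset (Fin n))) (i : Fin n) : ℕ :=
  (E.filter (fun e => i ∈ e)).card

/-- The average 2-degree of vertex `i` in a `k`-uniform hypergraph:
`m_i = (Σ_{{i,i₂,…,i_k} ∈ E_i} d_{i₂} ⋯ d_{i_k}) / d_i^{k-1}`. -/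
noncomputable def avg2 (n k : ℕ) (E : Finset (Finset (Fin n))) (i : Fin n) : ℝ :=
  (∑ e ∈ E.filter (fun e => i ∈ e), ∏ j ∈ e.erase i, (hDeg n E j : ℝ)) /
    (hDeg n E i : ℝ) ^ (k-1)

/-- The adjacency tensor of a `k`-uniform hypergraph: entry `1/(k-1)!` at `(i₁,…,i_k)` when
`{i₁,…,i_k}` is an edge, and `0` otherwise. -/
noncomputable def adjT (n k : ℕ) (E : Finset (Finset (Fin n))) :
    Fin n → (Fin (k-1) → Fin n) → ℝ :=
  fun i f => if insert i (Finset.image f Finset.univ) ∈ E then 1 / (k-1).factorial else 0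

/-- The signless Laplacian tensor `Q(G) = D(G) + A(G)`. -/
noncomputable def qT (n k : ℕ) (E : Finset (Finset (Fin n))) :
    Fin n → (Fin (k-1) → Fin n) → ℝ :=
  fun i f => (if ∀ a, f a = i then (hDeg n E i : ℝ) else 0) + adjT n k E i f

/-- A hypergraph is connected if every pair of distinct vertices is joined by a sequence of
pairwise intersecting edges. -/
def HConn (n : ℕ) (E : Finset (Finset (Fin n))) : Prop :=
  ∀ u v : Fin n, u ≠ v → ∃ r : ℕ, ∃ es : Fin (r+1) → Finset (Fin n),
    (∀ s, es s ∈ E) ∧ u ∈ es 0 ∧ v ∈ es (Fin.last r) ∧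
    ∀ s : Fin r, (es s.castSucc ∩ es s.succ).Nonempty

lemma adj_struct {n k : ℕ} {E : Finset (Finset (Fin n))}
    (hcard : ∀ e ∈ E, e.card = k) (i : Fin n) (f : Fin (k-1) → Fin n)
    (hf : insert i (Finset.image f Finset.univ) ∈ E) :
    Function.Injective f ∧ ∀ a, f a ≠ i := by
  set s := Finset.image f Finset.univ with hs
  have hsc : s.card ≤ k - 1 := le_trans Finset.card_image_le (by simp)
  have hins : (insert i s).card = k := hcard _ hf
  have hk1 : 1 ≤ k := by
    have h0 : 0 < (insert i s).card := Finset.card_pos.mpr ⟨i, Finset.mem_insert_self i s⟩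
    omega
  have hni : i ∉ s := by
    intro h
    rw [Finset.insert_eq_self.mpr h] at hins; omega
  have hsc' : s.card = k - 1 := by
    have := Finset.card_insert_of_notMem hni
    omega
  have hinj : Set.InjOn f (Finset.univ : Finset (Fin (k-1))) := by
    apply Finset.card_image_iff.mp
    rw [← hs, hsc']; simp
  refine ⟨fun a b hab => hinj (by simp) (by simp) hab, fun a h => hni ?_⟩
  exact h ▸ Finset.mem_image_of_mem f (Finset.mem_univ a)

lemma count_bound {n k : ℕ} {E : Finset (Finset (Fin n))}
    (hcard : ∀ e ∈ E, e.card = k) (i : Fin n) :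
    (Finset.univ.filter (fun f : Fin (k-1) → Fin n =>
      insert i (Finset.image f Finset.univ) ∈ E)).card ≤ (k-1).factorial * hDeg n E i := by
  classical
  unfold hDeg
  apply Finset.card_le_mul_card_image_of_maps_to
    (f := fun f : Fin (k-1) → Fin n => insert i (Finset.image f Finset.univ))
  · intro f hf
    simp only [Finset.mem_filter, Finset.mem_univ, true_and] at hf ⊢
    exact ⟨hf, Finset.mem_insert_self i _⟩
  · intro e he
    simp only [Finset.mem_filter] at he
    have hie : i ∈ e := he.2
    have hec : e.card = k := hcard _ he.1
    have herase : (e.erase i).card = k - 1 := by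
      rw [Finset.card_erase_of_mem hie, hec]
    set T := ((Finset.univ : Finset (Fin (k-1) → Fin n)).filter (fun f =>
      insert i (Finset.image f Finset.univ) ∈ E)).filter (fun f =>
      insert i (Finset.image f Finset.univ) = e) with hT
    have hmemT : ∀ f, f ∈ T → (∀ a, f a ∈ e.erase i) ∧ Function.Injective f := by
      intro f hf
      simp only [hT, Finset.mem_filter, Finset.mem_univ, true_and] at hf
      obtain ⟨hinj, hne⟩ := adj_struct hcard i f hf.1
      refine ⟨fun a => Finset.mem_erase.mpr ⟨hne a, ?_⟩, hinj⟩
      rw [← hf.2]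
      exact Finset.mem_insert_of_mem (Finset.mem_image_of_mem f (Finset.mem_univ a))
    let emb : {f // f ∈ T} → (Fin (k-1) ↪ {x // x ∈ e.erase i}) := fun f =>
      ⟨fun a => ⟨f.1 a, (hmemT f.1 f.2).1 a⟩, fun a b hab =>
        (hmemT f.1 f.2).2 (by simpa using congrArg Subtype.val hab)⟩
    have hinj : Function.Injective emb := by
      intro f g hfg
      apply Subtype.ext
      funext a
      have := congrArg (fun φ => (φ.toFun a : Fin n)) hfg
      simpa [emb] using this
    calc T.card = Fintype.card {f // f ∈ T} := (Fintype.card_coe _).symm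
      _ ≤ Fintype.card (Fin (k-1) ↪ {x // x ∈ e.erase i}) :=
          Fintype.card_le_of_injective emb hinj
      _ = (k-1).factorial := by
          rw [Fintype.card_embedding_eq, Fintype.card_coe, herase, Fintype.card_fin,
            Nat.descFactorial_self]

set_option maxHeartbeats 1000000 in
theorem bound_aux (n k : ℕ) (hk : 2 ≤ k)
    (E : Finset (Finset (Fin n))) (hcard : ∀ e ∈ E, e.card = k)
    (v0 v1 : Fin n) (hv0 : v0.val = 0) (hv1 : v1.val = 1)
    (hsort : ∀ i j : Fin n, i ≤ j → hDeg n E j ≤ hDeg n E i)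
    (hd2pos : 0 < hDeg n E v1)
    (hd12 : hDeg n E v1 < hDeg n E v0)
    (dstar : ℝ)
    (hroot : (hDeg n E v1 : ℝ) * dstar ^ k +
        ((hDeg n E v1 : ℝ) - (hDeg n E v0 : ℝ)) * dstar ^ (k-1) -
        (hDeg n E v0 : ℝ) = 0)
    (hlow : ((hDeg n E v0 : ℝ) / (hDeg n E v1 : ℝ)) ^ ((1 : ℝ)/k) < dstar) :
    specRad n k (qT n k E) ≤
      (hDeg n E v0 : ℝ) + (hDeg n E v0 : ℝ) * (1/dstar) ^ (k-1) := by
  classical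
  have hd2R : (0:ℝ) < (hDeg n E v1 : ℝ) := by exact_mod_cast hd2pos
  have hd12R : (hDeg n E v1 : ℝ) < (hDeg n E v0 : ℝ) := by exact_mod_cast hd12
  have hd1R : (0:ℝ) < (hDeg n E v0 : ℝ) := lt_trans hd2R hd12R
  have hratio : 1 < (hDeg n E v0 : ℝ) / (hDeg n E v1 : ℝ) := (one_lt_div hd2R).mpr hd12R
  have ht1 : 1 < dstar := by
    have hkpos : (0:ℝ) < (k:ℝ) := by exact_mod_cast (by omega : 0 < k)
    have h1 : (0:ℝ) < (hDeg n E v0 : ℝ) / (hDeg n E v1 : ℝ) := by positivity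
    have h2 : (0:ℝ) < (1:ℝ)/(k:ℝ) := by positivity
    exact lt_trans ((Real.one_lt_rpow_iff_of_pos h1).mpr (Or.inl ⟨hratio, h2⟩)) hlow
  have ht0 : (0:ℝ) < dstar := by linarith
  have htpow : (0:ℝ) < dstar ^ (k-1) := pow_pos ht0 _
  have hinvpow : (1/dstar)^(k-1) * dstar^(k-1) = 1 := by
    have hc : (1/dstar) * dstar = 1 := one_div_mul_cancel (ne_of_gt ht0)
    calc (1/dstar)^(k-1) * dstar^(k-1) = ((1/dstar)*dstar)^(k-1) := (mul_pow _ _ _).symm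
      _ = 1 := by rw [hc, one_pow]
  have hkk : k = (k-1) + 1 := by omega
  have hkey : (hDeg n E v1 : ℝ) * (dstar + 1) * dstar^(k-1)
      = (hDeg n E v0 : ℝ) * dstar^(k-1) + (hDeg n E v0 : ℝ) := by
    have h := hroot
    have hpow : dstar ^ k = dstar ^ (k-1) * dstar := by
      conv_lhs => rw [hkk]
      rw [pow_succ]
    rw [hpow] at h
    linear_combination h
  have hBeq : (hDeg n E v1 : ℝ) * (dstar + 1)
      = (hDeg n E v0 : ℝ) + (hDeg n E v0 : ℝ) * (1/dstar)^(k-1) := by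
    refine mul_right_cancel₀ (ne_of_gt htpow) ?_
    calc (hDeg n E v1 : ℝ) * (dstar + 1) * dstar^(k-1)
        = (hDeg n E v0 : ℝ) * dstar^(k-1) + (hDeg n E v0 : ℝ) := hkey
      _ = ((hDeg n E v0 : ℝ) + (hDeg n E v0 : ℝ) * (1/dstar)^(k-1)) * dstar^(k-1) := by
          linear_combination -(hDeg n E v0 : ℝ) * hinvpow
  have hB0 : (0:ℝ) ≤ (hDeg n E v0 : ℝ) + (hDeg n E v0 : ℝ) * (1/dstar)^(k-1) := by nlinarith
  apply Real.sSup_le _ hB0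
  rintro r ⟨ρ, rfl, x, hxne, heig⟩
  set u : Fin n → ℝ := fun j => if j = v0 then dstar else 1 with hu
  have hupos : ∀ j, 0 < u j := by
    intro j; by_cases h : j = v0 <;> simp [hu, h] <;> linarith
  have huone : ∀ j, 1 ≤ u j := by
    intro j; by_cases h : j = v0 <;> simp [hu, h]; linarith
  set y : Fin n → ℝ := fun j => ‖x j‖ / u j with hy
  obtain ⟨i₀, -, hmax⟩ := Finset.exists_max_image Finset.univ y ⟨v0, Finset.mem_univ v0⟩
  set M := y i₀ with hM
  have hMpos : 0 < M := by
    obtain ⟨j, hj⟩ := Function.ne_iff.mp hxne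
    have h1 : 0 < y j := div_pos (norm_pos_iff.mpr hj) (hupos j)
    exact lt_of_lt_of_le h1 (hmax j (Finset.mem_univ j))
  have hxabs : ∀ j, ‖x j‖ = u j * y j := by
    intro j
    rw [hy]
    field_simp [(hupos j).ne']
  have hxle : ∀ j, ‖x j‖ ≤ u j * M := by
    intro j
    rw [hxabs j]
    exact mul_le_mul_of_nonneg_left (hmax j (Finset.mem_univ j)) (le_of_lt (hupos j))
  have hQnn : ∀ i f, 0 ≤ qT n k E i f := by
    intro i f
    unfold qT adjT
    apply add_nonneg <;> split_ifs <;> positivity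
  set R : Fin n → ℝ := fun i => ∑ f : Fin (k-1) → Fin n, qT n k E i f * ∏ a, u (f a) with hR
  have hstep : ‖ρ‖ * ((u i₀ * M)^(k-1)) ≤ R i₀ * M^(k-1) := by
    have h1 : ‖ρ * x i₀ ^ (k-1)‖ = ‖ρ‖ * (u i₀ * M)^(k-1) := by
      rw [norm_mul, norm_pow, hxabs i₀, hM]
    rw [← h1, ← heig i₀]
    calc ‖∑ f : Fin (k-1) → Fin n, (qT n k E i₀ f : ℂ) * ∏ a, x (f a)‖
        ≤ ∑ f : Fin (k-1) → Fin n, ‖(qT n k E i₀ f : ℂ) * ∏ a, x (f a)‖ :=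
          norm_sum_le _ _
      _ = ∑ f : Fin (k-1) → Fin n, qT n k E i₀ f * ∏ a, ‖x (f a)‖ := by
          refine Finset.sum_congr rfl fun f _ => ?_
          rw [norm_mul, norm_prod, Complex.norm_real, Real.norm_of_nonneg (hQnn i₀ f)]
      _ ≤ ∑ f : Fin (k-1) → Fin n, qT n k E i₀ f * ((∏ a, u (f a)) * M^(k-1)) := by
          refine Finset.sum_le_sum fun f _ => ?_
          refine mul_le_mul_of_nonneg_left ?_ (hQnn i₀ f)
          calc ∏ a, ‖x (f a)‖ ≤ ∏ a, (u (f a) * M) :=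
                Finset.prod_le_prod (fun a _ => norm_nonneg _) (fun a _ => hxle (f a))
            _ = (∏ a, u (f a)) * M^(k-1) := by
                rw [Finset.prod_mul_distrib, Finset.prod_const, Finset.card_univ,
                  Fintype.card_fin]
      _ = R i₀ * M^(k-1) := by
          rw [hR, Finset.sum_mul]
          exact Finset.sum_congr rfl fun f _ => by ring
  have hrho : ‖ρ‖ * (u i₀)^(k-1) ≤ R i₀ := by
    have hMp : 0 < M^(k-1) := pow_pos hMpos _
    refine le_of_mul_le_mul_right ?_ hMp
    calc ‖ρ‖ * u i₀ ^ (k-1) * M^(k-1) = ‖ρ‖ * (u i₀ * M)^(k-1) := by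
          rw [mul_pow]; ring
      _ ≤ R i₀ * M^(k-1) := hstep
  have hRsplit : ∀ i : Fin n, R i = (hDeg n E i : ℝ) * u i ^ (k-1) +
      ∑ f : Fin (k-1) → Fin n, adjT n k E i f * ∏ a, u (f a) := by
    intro i
    rw [hR]
    simp only [qT, add_mul]
    rw [Finset.sum_add_distrib]
    congr 1
    have hconv : (∑ f : Fin (k-1) → Fin n,
        (if ∀ a, f a = i then (hDeg n E i : ℝ) else 0) * ∏ a, u (f a))
        = ∑ f : Fin (k-1) → Fin n,
        (if f = (fun _ => i) then (hDeg n E i : ℝ) * ∏ a, u (f a) else 0) := by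
      refine Finset.sum_congr rfl fun f _ => ?_
      by_cases h : f = fun _ => i
      · rw [if_pos h, if_pos (by rw [h]; intro a; rfl)]
      · rw [if_neg h, if_neg (fun hh => h (funext hh)), zero_mul]
    rw [hconv, Finset.sum_ite_eq' Finset.univ (fun _ => i)
      (fun f => (hDeg n E i : ℝ) * ∏ a, u (f a))]
    by_cases h : i = v0 <;> simp [hu, h, Finset.prod_const]
  have hAbound : ∀ (i : Fin n) (c : ℝ), 0 ≤ c →
      (∀ f : Fin (k-1) → Fin n, insert i (Finset.image f Finset.univ) ∈ E →
        ∏ a, u (f a) ≤ c) →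
      (∑ f : Fin (k-1) → Fin n, adjT n k E i f * ∏ a, u (f a)) ≤ c * (hDeg n E i : ℝ) := by
    intro i c hc hfb
    have hfacpos : (0:ℝ) < (k-1).factorial := by positivity
    have h1 : (∑ f : Fin (k-1) → Fin n, adjT n k E i f * ∏ a, u (f a)) ≤
        ∑ f : Fin (k-1) → Fin n,
          (if insert i (Finset.image f Finset.univ) ∈ E then c / (k-1).factorial else 0) := by
      refine Finset.sum_le_sum fun f _ => ?_
      unfold adjT
      by_cases h : insert i (Finset.image f Finset.univ) ∈ E
      · rw [if_pos h, if_pos h]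
        calc (1/((k-1).factorial:ℝ)) * ∏ a, u (f a) ≤ (1/((k-1).factorial:ℝ)) * c :=
              mul_le_mul_of_nonneg_left (hfb f h) (by positivity)
          _ = c / (k-1).factorial := by ring
      · rw [if_neg h, if_neg h, zero_mul]
    refine le_trans h1 ?_
    rw [← Finset.sum_filter, Finset.sum_const, nsmul_eq_mul]
    have hcount := count_bound hcard i
    calc ((Finset.univ.filter (fun f : Fin (k-1) → Fin n =>
          insert i (Finset.image f Finset.univ) ∈ E)).card : ℝ) * (c / (k-1).factorial)
        ≤ (((k-1).factorial * hDeg n E i : ℕ) : ℝ) * (c / (k-1).factorial) := by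
          refine mul_le_mul_of_nonneg_right ?_ (by positivity)
          exact_mod_cast hcount
      _ = c * (hDeg n E i : ℝ) := by
          push_cast
          field_simp
  have hprod1 : ∀ f : Fin (k-1) → Fin n, insert v0 (Finset.image f Finset.univ) ∈ E →
      ∏ a, u (f a) ≤ 1 := by
    intro f hf
    obtain ⟨-, hne⟩ := adj_struct hcard v0 f hf
    have h1 : ∀ a, u (f a) = 1 := fun a => by simp [hu, hne a]
    rw [Finset.prod_congr rfl (fun a _ => h1 a), Finset.prod_const_one]
  have hprodt : ∀ (i : Fin n) (f : Fin (k-1) → Fin n),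
      insert i (Finset.image f Finset.univ) ∈ E → ∏ a, u (f a) ≤ dstar := by
    intro i f hf
    obtain ⟨hinj, -⟩ := adj_struct hcard i f hf
    by_cases h : ∃ a₀, f a₀ = v0
    · obtain ⟨a₀, ha₀⟩ := h
      have h1 : ∀ a, u (f a) = if a = a₀ then dstar else 1 := by
        intro a
        by_cases ha : a = a₀
        · simp [hu, ha, ha₀]
        · have h2 : f a ≠ v0 := fun hc => ha (hinj (hc.trans ha₀.symm))
          simp [hu, h2, ha]
      rw [Finset.prod_congr rfl (fun a _ => h1 a),
        Finset.prod_ite_eq' Finset.univ a₀ (fun _ => dstar)]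
      simp
    · push_neg at h
      have h1 : ∀ a, u (f a) = 1 := fun a => by simp [hu, h a]
      rw [Finset.prod_congr rfl (fun a _ => h1 a), Finset.prod_const_one]
      linarith
  by_cases hi : i₀ = v0
  · have huv0 : u i₀ = dstar := by simp [hu, hi]
    have hRb : R i₀ ≤ (hDeg n E v0 : ℝ) * dstar^(k-1) + (hDeg n E v0 : ℝ) := by
      rw [hRsplit i₀, huv0, hi]
      have hA := hAbound v0 1 zero_le_one hprod1
      linarith
    refine le_of_mul_le_mul_right ?_ htpow
    calc ‖ρ‖ * dstar^(k-1) ≤ R i₀ := by rw [← huv0]; exact hrho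
      _ ≤ (hDeg n E v0 : ℝ) * dstar^(k-1) + (hDeg n E v0 : ℝ) := hRb
      _ = ((hDeg n E v0 : ℝ) + (hDeg n E v0 : ℝ) * (1/dstar)^(k-1)) * dstar^(k-1) := by
          linear_combination -(hDeg n E v0 : ℝ) * hinvpow
  · have huv1 : u i₀ = 1 := by simp [hu, hi]
    have hdile : (hDeg n E i₀ : ℝ) ≤ (hDeg n E v1 : ℝ) := by
      have hle : v1 ≤ i₀ := by
        have h0 : i₀.val ≠ 0 := fun h => hi (Fin.ext (by rw [h, hv0]))
        rw [Fin.le_def, hv1]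
        omega
      exact_mod_cast hsort v1 i₀ hle
    have hdinn : (0:ℝ) ≤ (hDeg n E i₀ : ℝ) := Nat.cast_nonneg _
    have hRb : R i₀ ≤ (hDeg n E v1 : ℝ) * (dstar + 1) := by
      rw [hRsplit i₀, huv1, one_pow, mul_one]
      have hA := hAbound i₀ dstar (le_of_lt ht0) (hprodt i₀)
      nlinarith
    calc ‖ρ‖ = ‖ρ‖ * (u i₀)^(k-1) := by rw [huv1, one_pow, mul_one]
      _ ≤ R i₀ := hrho
      _ ≤ (hDeg n E v1 : ℝ) * (dstar + 1) := hRb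
      _ = (hDeg n E v0 : ℝ) + (hDeg n E v0 : ℝ) * (1/dstar)^(k-1) := hBeq

/-- Let `G` be a `k`-uniform hypergraph on `n` vertices with degree sequence
`d₁ ≥ d₂ ≥ … ≥ d_n`, `d₁ > d₂ > 0`, and let `d*` be a root of
`h(t) = d₂ t^k + (d₂−d₁) t^{k−1} − d₁` in `((d₁/d₂)^{1/k}, d₁/d₂)`. Then
`μ(G) ≤ d₁ + d₁ (1/d*)^{k−1}`. -/
theorem stmt13 (n k : ℕ) (hk : 2 ≤ k) (hkn : k ≤ n)
    (E : Finset (Finset (Fin n))) (hcard : ∀ e ∈ E, e.card = k)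
    (hsort : ∀ i j : Fin n, i ≤ j → hDeg n E j ≤ hDeg n E i)
    (hd2pos : 0 < hDeg n E ⟨1, by omega⟩)
    (hd12 : hDeg n E ⟨1, by omega⟩ < hDeg n E ⟨0, by omega⟩)
    (dstar : ℝ)
    (hroot : (hDeg n E ⟨1, by omega⟩ : ℝ) * dstar ^ k +
        ((hDeg n E ⟨1, by omega⟩ : ℝ) - (hDeg n E ⟨0, by omega⟩ : ℝ)) * dstar ^ (k-1) -
        (hDeg n E ⟨0, by omega⟩ : ℝ) = 0)
    (hlow : ((hDeg n E ⟨0, by omega⟩ : ℝ) / (hDeg n E ⟨1, by omega⟩ : ℝ)) ^ ((1 : ℝ)/k)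
        < dstar)
    (hup : dstar < (hDeg n E ⟨0, by omega⟩ : ℝ) / (hDeg n E ⟨1, by omega⟩ : ℝ)) :
    specRad n k (qT n k E) ≤
      (hDeg n E ⟨0, by omega⟩ : ℝ) + (hDeg n E ⟨0, by omega⟩ : ℝ) * (1/dstar) ^ (k-1) := by

  exact bound_aux n k hk E hcard ⟨0, by omega⟩ ⟨1, by omega⟩ rfl rfl hsort
    hd2pos hd12 dstar hroot hlow
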